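/- arXiv:1309.3950 — 7 statements merged into one kernel-verified Lean document; each statement's English description precedes it below -/
import Mathlib

section
/- Let q(x) = -3/⟨x⟩² on ℝ³ where ⟨x⟩ = √(1+|x|²), and let φ₀ be a unit vector in ℂ⁴. Then the function f(x) = ⟨x⟩⁻³ (I₄ + i α·x) φ₀ satisfies the equation (-i α·∇ + q) f = 0 pointwise on ℝ³, where α = (α₁,α₂,α₃) are the standard 4×4 Dirac alpha matrices. -/
open Matrix Complex MeasureTheory Filter
open scoped RealInnerProductSpace Matrix.Norms.L2Operator

noncomputable section

abbrev R3 := EuclideanSpace ℝ (Fin 3)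
abbrev C4 := EuclideanSpace ℂ (Fin 4)

/-- The Pauli matrices σ₁, σ₂, σ₃. -/
def pauli : Fin 3 → Matrix (Fin 2) (Fin 2) ℂ :=
  ![!![0, 1; 1, 0], !![0, -I; I, 0], !![1, 0; 0, -1]]

/-- The standard 4×4 Dirac alpha matrices αⱼ = [[0,σⱼ],[σⱼ,0]]. -/
def diracAlpha (j : Fin 3) : Matrix (Fin 4) (Fin 4) ℂ :=
  Matrix.reindex finSumFinEquiv finSumFinEquiv
    (Matrix.fromBlocks 0 (pauli j) (pauli j) 0)

/-- α·v = v₁α₁ + v₂α₂ + v₃α₃. -/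
def alphaDot (v : EuclideanSpace ℝ (Fin 3)) : Matrix (Fin 4) (Fin 4) ℂ :=
  ∑ j, (v j : ℂ) • diracAlpha j

/-- Matrix acting on a Euclidean (ℓ²) vector. -/
def mulVecE {n : ℕ} (M : Matrix (Fin n) (Fin n) ℂ) (v : EuclideanSpace ℂ (Fin n)) :
    EuclideanSpace ℂ (Fin n) :=
  (WithLp.equiv 2 _).symm (M.mulVec ((WithLp.equiv 2 _) v))

/-- The massless Dirac operator (-i α·∇ f)(x), defined pointwise. -/
def diracOp (f : R3 → C4) (x : R3) : C4 :=
  (-I) • ∑ j, mulVecE (diracAlpha j) (fderiv ℝ f x (EuclideanSpace.single j 1))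

/- ### Auxiliary matrix lemmas -/

lemma dirac_mul (j k : Fin 3) : diracAlpha j * diracAlpha k =
    Matrix.reindex finSumFinEquiv finSumFinEquiv
      (Matrix.fromBlocks (pauli j * pauli k) 0 0 (pauli j * pauli k)) := by
  simp [diracAlpha, Matrix.reindex_apply, Matrix.submatrix_mul_equiv,
    Matrix.fromBlocks_multiply]

lemma pauli_mul_self (j : Fin 3) : pauli j * pauli j = 1 := by
  fin_cases j <;>
  · ext i k
    fin_cases i <;> fin_cases k <;>
      simp [pauli, Matrix.mul_apply, Fin.sum_univ_two, Matrix.one_apply]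

lemma pauli_anti {j k : Fin 3} (h : j ≠ k) : pauli j * pauli k = -(pauli k * pauli j) := by
  fin_cases j <;> fin_cases k <;> first
  | exact absurd rfl h
  | · ext i l
      fin_cases i <;> fin_cases l <;>
        simp [pauli, Matrix.mul_apply, Fin.sum_univ_two] <;>
        ring_nf <;> simp [Complex.I_sq] <;> ring

lemma dirac_mul_self (j : Fin 3) : diracAlpha j * diracAlpha j = 1 := by
  rw [dirac_mul, pauli_mul_self]
  simp [Matrix.fromBlocks_one]

lemma dirac_anti {j k : Fin 3} (h : j ≠ k) :
    diracAlpha j * diracAlpha k = -(diracAlpha k * diracAlpha j) := by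
  rw [dirac_mul, dirac_mul, pauli_anti h]
  ext i l
  simp only [Matrix.reindex_apply, Matrix.submatrix_apply, Matrix.neg_apply]
  rcases finSumFinEquiv.symm i with a | a <;> rcases finSumFinEquiv.symm l with b | b <;>
    simp [Matrix.fromBlocks]

lemma alpha_dot_sq (v : EuclideanSpace ℝ (Fin 3)) :
    alphaDot v * alphaDot v = (((v 0)^2+(v 1)^2+(v 2)^2 : ℝ):ℂ) • 1 := by
  simp only [alphaDot, Fin.sum_univ_three, add_mul, mul_add, smul_mul_assoc,
    mul_smul_comm, dirac_mul_self]
  rw [dirac_anti (show (1:Fin 3) ≠ 0 by decide), dirac_anti (show (2:Fin 3) ≠ 0 by decide),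
    dirac_anti (show (2:Fin 3) ≠ 1 by decide)]
  push_cast
  module

/- ### Auxiliary mulVecE lemmas -/

lemma mulVecE_apply {n : ℕ} (M : Matrix (Fin n) (Fin n) ℂ) (v : EuclideanSpace ℂ (Fin n))
    (i : Fin n) : mulVecE M v i = M.mulVec v i := rfl

lemma mulVecE_add {n : ℕ} (A B : Matrix (Fin n) (Fin n) ℂ) (v : EuclideanSpace ℂ (Fin n)) :
    mulVecE (A + B) v = mulVecE A v + mulVecE B v := by
  ext i; simp [mulVecE_apply, Matrix.add_mulVec]

lemma mulVecE_smul {n : ℕ} (c : ℂ) (A : Matrix (Fin n) (Fin n) ℂ) (v : EuclideanSpace ℂ (Fin n)) :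
    mulVecE (c • A) v = c • mulVecE A v := by
  ext i; simp [mulVecE_apply, Matrix.smul_mulVec]

lemma mulVecE_smul_real {n : ℕ} (c : ℝ) (A : Matrix (Fin n) (Fin n) ℂ)
    (v : EuclideanSpace ℂ (Fin n)) : mulVecE (c • A) v = c • mulVecE A v := by
  rw [show c • A = ((c:ℂ)) • A by ext i k; simp [Complex.real_smul], mulVecE_smul]
  ext i
  rw [show ((c:ℂ) • mulVecE A v) i = (c:ℂ) * (mulVecE A v i) from rfl]
  simp [Complex.real_smul]

lemma mulVecE_smul_vec {n : ℕ} (c : ℂ) (A : Matrix (Fin n) (Fin n) ℂ)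
    (v : EuclideanSpace ℂ (Fin n)) : mulVecE A (c • v) = c • mulVecE A v := by
  ext i; exact congrFun (Matrix.mulVec_smul A c (v : Fin n → ℂ)) i

lemma mulVecE_add_vec {n : ℕ} (A : Matrix (Fin n) (Fin n) ℂ) (v w : EuclideanSpace ℂ (Fin n)) :
    mulVecE A (v + w) = mulVecE A v + mulVecE A w := by
  ext i; exact congrFun (Matrix.mulVec_add A (v : Fin n → ℂ) (w : Fin n → ℂ)) i

lemma mulVecE_one {n : ℕ} (v : EuclideanSpace ℂ (Fin n)) : mulVecE 1 v = v := by
  ext i; simp [mulVecE_apply]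

lemma mulVecE_mul {n : ℕ} (A B : Matrix (Fin n) (Fin n) ℂ) (v : EuclideanSpace ℂ (Fin n)) :
    mulVecE (A * B) v = mulVecE A (mulVecE B v) := by
  ext i; exact (congrFun (Matrix.mulVec_mulVec (v : Fin n → ℂ) A B) i).symm

lemma norm_sq_eq3 (x : EuclideanSpace ℝ (Fin 3)) : ‖x‖^2 = (x 0)^2 + (x 1)^2 + (x 2)^2 := by
  rw [EuclideanSpace.norm_eq, Real.sq_sqrt (by positivity)]
  simp [Fin.sum_univ_three, sq_abs]

lemma real_smul_C4 (r : ℝ) (w : EuclideanSpace ℂ (Fin 4)) : (r:ℂ) • w = r • w := by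
  rw [show ((r:ℂ)) = algebraMap ℝ ℂ r from rfl, algebraMap_smul]

/- ### Main theorem -/

/-- The zero mode of the 3-d massless Dirac operator with potential q(x) = -3/⟨x⟩². -/
theorem stmt0 (φ₀ : C4) (hφ : ‖φ₀‖ = 1)
    (q : R3 → ℝ) (hq : ∀ x, q x = -3 / (1 + ‖x‖ ^ 2))
    (f : R3 → C4)
    (hf : ∀ x, f x =
      ((Real.sqrt (1 + ‖x‖ ^ 2) : ℂ)) ⁻¹ ^ 3 • mulVecE (1 + I • alphaDot x) φ₀) :
    ∀ x, diracOp f x + (q x : ℂ) • f x = 0 := by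
  intro x
  have hupos : ∀ y : R3, (0:ℝ) < 1 + ‖y‖^2 := fun y => by positivity
  set g : R3 → ℝ := fun y => (1 + ‖y‖^2) ^ (-(3/2) : ℝ) with hgdef
  have hcast : ∀ y : R3, ((Real.sqrt (1 + ‖y‖^2) : ℂ))⁻¹ ^ 3 = ((g y : ℝ) : ℂ) := by
    intro y
    rw [show ((Real.sqrt (1 + ‖y‖^2) : ℂ))⁻¹ ^ 3
        = ((((Real.sqrt (1 + ‖y‖^2))⁻¹ ^ 3 : ℝ)) : ℂ) by push_cast; ring]
    congr 1
    rw [Real.sqrt_eq_rpow, ← Real.rpow_neg (hupos y).le, ← Real.rpow_natCast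
      ((1 + ‖y‖^2) ^ (-(1/2):ℝ)) 3, ← Real.rpow_mul (hupos y).le]
    norm_num [hgdef]
  set L : R3 →L[ℝ] ℝ :=
    (-(3/2) * (1+‖x‖^2) ^ ((-(3/2):ℝ)-1)) • (2 • (innerSL ℝ x)) with hLdef
  have hg' : HasFDerivAt g L x := by
    have h1 : HasFDerivAt (fun y : R3 => 1 + ‖y‖^2) (2 • (innerSL ℝ x)) x :=
      ((hasStrictFDerivAt_norm_sq x).hasFDerivAt).const_add 1
    exact (Real.hasDerivAt_rpow_const (x := 1+‖x‖^2) (p := (-(3/2):ℝ))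
      (Or.inl (hupos x).ne')).comp_hasFDerivAt x h1
  set T : R3 →L[ℝ] C4 :=
    ∑ j, (EuclideanSpace.proj j : R3 →L[ℝ] ℝ).smulRight (I • mulVecE (diracAlpha j) φ₀)
    with hTdef
  have hTapply : ∀ y : R3, T y = I • mulVecE (alphaDot y) φ₀ := by
    intro y
    rw [hTdef]
    simp only [ContinuousLinearMap.sum_apply, ContinuousLinearMap.add_apply,
      ContinuousLinearMap.smulRight_apply, alphaDot, Fin.sum_univ_three, mulVecE_add,
      mulVecE_smul]
    rw [show (EuclideanSpace.proj (0:Fin 3) : R3 →L[ℝ] ℝ) y = y 0 from rfl,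
      show (EuclideanSpace.proj (1:Fin 3) : R3 →L[ℝ] ℝ) y = y 1 from rfl,
      show (EuclideanSpace.proj (2:Fin 3) : R3 →L[ℝ] ℝ) y = y 2 from rfl,
      ← real_smul_C4, ← real_smul_C4, ← real_smul_C4]
    module
  have hv : HasFDerivAt (fun y : R3 => mulVecE (1 + I • alphaDot y) φ₀) T x := by
    have heq : ∀ y : R3, mulVecE (1 + I • alphaDot y) φ₀ = φ₀ + T y := by
      intro y; rw [mulVecE_add, mulVecE_one, hTapply, mulVecE_smul]
    simp only [heq]
    exact T.hasFDerivAt.const_add φ₀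
  have hc : HasFDerivAt (fun y : R3 => ((g y : ℝ) : ℂ)) (Complex.ofRealCLM.comp L) x :=
    Complex.ofRealCLM.hasFDerivAt.comp x hg'
  have hfD : HasFDerivAt f
      (((g x : ℝ):ℂ) • T + (Complex.ofRealCLM.comp L).smulRight
        (mulVecE (1 + I • alphaDot x) φ₀)) x := by
    refine (hc.smul hv).congr_of_eventuallyEq ?_
    exact Filter.Eventually.of_forall fun y => by rw [hf y, hcast y]; rfl
  have hfd := hfD.fderiv
  set r : ℝ := (1+‖x‖^2) ^ ((-(3/2):ℝ)-1) with hrdef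
  set w2 : C4 := mulVecE (alphaDot x) φ₀ with hw2def
  have hTj : ∀ j : Fin 3, T (EuclideanSpace.single j 1) = I • mulVecE (diracAlpha j) φ₀ := by
    intro j
    rw [hTapply]
    congr 2
    simp [alphaDot, EuclideanSpace.single_apply, ite_smul]
  have hLj : ∀ j : Fin 3, L (EuclideanSpace.single j 1) = 2 * (-(3/2) * r) * x j := by
    intro j
    rw [hLdef]
    simp only [ContinuousLinearMap.smul_apply, ContinuousLinearMap.smul_apply, smul_eq_mul]
    rw [two_smul]
    simp only [ContinuousLinearMap.add_apply, innerSL_apply_apply]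
    rw [EuclideanSpace.inner_single_right]
    simp [hrdef]; ring
  have happ : ∀ j : Fin 3, fderiv ℝ f x (EuclideanSpace.single j 1) =
      ((g x : ℝ):ℂ) • (I • mulVecE (diracAlpha j) φ₀)
        + ((2 * (-(3/2) * r) * x j : ℝ):ℂ) • (φ₀ + I • w2) := by
    intro j
    rw [hfd]
    simp only [ContinuousLinearMap.add_apply, ContinuousLinearMap.smul_apply,
      ContinuousLinearMap.smulRight_apply, ContinuousLinearMap.comp_apply]
    rw [hTj j, hLj j]
    rw [mulVecE_add, mulVecE_one, mulVecE_smul, ← hw2def]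
    rw [show (Complex.ofRealCLM (2 * (-(3/2) * r) * x j) : ℂ)
        = ((2 * (-(3/2) * r) * x j : ℝ):ℂ) from rfl]
  have hkey : ∀ z : C4, ((x 0:ℝ):ℂ) • mulVecE (diracAlpha 0) z
      + ((x 1:ℝ):ℂ) • mulVecE (diracAlpha 1) z
      + ((x 2:ℝ):ℂ) • mulVecE (diracAlpha 2) z = mulVecE (alphaDot x) z := by
    intro z
    simp only [alphaDot, Fin.sum_univ_three, mulVecE_add, mulVecE_smul]
  have hvec : mulVecE (alphaDot x) (φ₀ + I • w2)
      = w2 + (I * ((‖x‖^2:ℝ):ℂ)) • φ₀ := by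
    rw [mulVecE_add_vec, mulVecE_smul_vec, hw2def, ← mulVecE_mul, alpha_dot_sq,
      mulVecE_smul, mulVecE_one, norm_sq_eq3, smul_smul]
  have hS : (∑ j, mulVecE (diracAlpha j) (fderiv ℝ f x (EuclideanSpace.single j 1)))
      = ((g x:ℝ):ℂ) • (I • ((3:ℂ) • φ₀))
        + ((-3*r:ℝ):ℂ) • (w2 + (I * ((‖x‖^2:ℝ):ℂ)) • φ₀) := by
    rw [Fin.sum_univ_three, happ 0, happ 1, happ 2, ← hvec, ← hkey (φ₀ + I • w2)]
    simp only [mulVecE_add_vec, mulVecE_smul_vec, ← mulVecE_mul, dirac_mul_self, mulVecE_one]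
    push_cast
    module
  have hgr : g x = r * (1+‖x‖^2) := by
    rw [hrdef, hgdef, ← Real.rpow_add_one (hupos x).ne' ((-(3/2):ℝ)-1)]
    norm_num
  have hqg : ((-3 / (1+‖x‖^2) : ℝ) : ℂ) * ((g x : ℝ):ℂ) = ((-3 * r : ℝ):ℂ) := by
    norm_cast
    rw [hgr]
    field_simp
  rw [show diracOp f x = (-I) • ∑ j, mulVecE (diracAlpha j)
      (fderiv ℝ f x (EuclideanSpace.single j 1)) from rfl]
  have hqf : ((-3 / (1+‖x‖^2) : ℝ):ℂ) • (((g x:ℝ):ℂ) • (φ₀ + I • w2))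
      = ((-3*r:ℝ):ℂ) • (φ₀ + I • w2) := by rw [smul_smul, hqg]
  rw [hS, hf x, hcast x, hq x, mulVecE_add, mulVecE_one, mulVecE_smul, ← hw2def, hqf, hgr]
  push_cast
  match_scalars
  · linear_combination ((-3:ℂ) * (r:ℝ)) * Complex.I_sq
  · ring
end
end

section
/- Let q(x) = -2/⟨x⟩² on ℝ² and φ₀ a unit vector in ℂ². Then ψ(x) = ⟨x⟩⁻² (I₂ + i σ·x) φ₀ satisfies (-i σ·∇ + q) ψ = 0 pointwise on ℝ², where σ·∇ = σ₁∂₁ + σ₂∂₂ and σ·x = x₁σ₁ + x₂σ₂. -/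
open Matrix Complex MeasureTheory Filter
open scoped RealInnerProductSpace Matrix.Norms.L2Operator

noncomputable section

abbrev R2 := EuclideanSpace ℝ (Fin 2)
abbrev C2 := EuclideanSpace ℂ (Fin 2)

/-- The Pauli matrices σ₁, σ₂ (the ones appearing in the 2-d massless Dirac operator). -/
def pauli2 : Fin 2 → Matrix (Fin 2) (Fin 2) ℂ :=
  ![!![0, 1; 1, 0], !![0, -I; I, 0]]

/-- σ·v = v₁σ₁ + v₂σ₂. -/
def sigmaDot (v : EuclideanSpace ℝ (Fin 2)) : Matrix (Fin 2) (Fin 2) ℂ :=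
  ∑ j, (v j : ℂ) • pauli2 j

/-- The 2-d massless Dirac operator (-i σ·∇ f)(x), defined pointwise. -/
def diracOp2 (f : R2 → C2) (x : R2) : C2 :=
  (-I) • ∑ j, mulVecE (pauli2 j) (fderiv ℝ f x (EuclideanSpace.single j 1))

/-! ### Auxiliary material -/

/-- Coordinate projection as a continuous linear map `R2 →L[ℝ] ℂ`. -/
def Lco (j : Fin 2) : R2 →L[ℝ] ℂ := Complex.ofRealCLM.comp (EuclideanSpace.proj j)

/-- The basic scalar building block `(c + d x₀ + e x₁) / (1 + x₀² + x₁²)`. -/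
def hfun (c d e : ℂ) (y : R2) : ℂ :=
  (c + d * (y 0 : ℂ) + e * (y 1 : ℂ)) *
    (1 + (y 0 : ℂ) * (y 0 : ℂ) + (y 1 : ℂ) * (y 1 : ℂ))⁻¹

lemma hRne (x : R2) : (1 + (x 0 : ℂ) * (x 0 : ℂ) + (x 1 : ℂ) * (x 1 : ℂ)) ≠ 0 := by
  have : (1 + (x 0 : ℂ) * (x 0 : ℂ) + (x 1 : ℂ) * (x 1 : ℂ))
      = ((1 + (x 0) ^ 2 + (x 1) ^ 2 : ℝ) : ℂ) := by push_cast; ring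
  rw [this, Complex.ofReal_ne_zero]
  positivity

/-- Explicit derivative of `hfun`. -/
def Dfun (c d e : ℂ) (x : R2) : R2 →L[ℝ] ℂ :=
  ((c + d * (x 0 : ℂ) + e * (x 1 : ℂ)) •
      ((-((1 + (x 0 : ℂ) * (x 0 : ℂ) + (x 1 : ℂ) * (x 1 : ℂ)) ^ 2)⁻¹) •
        (((x 0 : ℂ) • Lco 0 + (x 0 : ℂ) • Lco 0) + ((x 1 : ℂ) • Lco 1 + (x 1 : ℂ) • Lco 1)))) +
    ((1 + (x 0 : ℂ) * (x 0 : ℂ) + (x 1 : ℂ) * (x 1 : ℂ))⁻¹ • (d • Lco 0 + e • Lco 1))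

lemma hasD (c d e : ℂ) (x : R2) : HasFDerivAt (hfun c d e) (Dfun c d e x) x := by
  have h0 : HasFDerivAt (fun y : R2 => ((y 0 : ℝ) : ℂ)) (Lco 0) x := (Lco 0).hasFDerivAt
  have h1 : HasFDerivAt (fun y : R2 => ((y 1 : ℝ) : ℂ)) (Lco 1) x := (Lco 1).hasFDerivAt
  have hnum : HasFDerivAt (fun y : R2 => c + d * (y 0 : ℂ) + e * (y 1 : ℂ))
      (d • Lco 0 + e • Lco 1) x := ((h0.const_mul d).const_add c).add (h1.const_mul e)
  have hden : HasFDerivAt (fun y : R2 => 1 + (y 0 : ℂ) * (y 0 : ℂ) + (y 1 : ℂ) * (y 1 : ℂ))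
      (((x 0 : ℂ) • Lco 0 + (x 0 : ℂ) • Lco 0) + ((x 1 : ℂ) • Lco 1 + (x 1 : ℂ) • Lco 1)) x :=
    ((h0.mul h0).const_add 1).add (h1.mul h1)
  have hinv := (hasDerivAt_inv (hRne x)).comp_hasFDerivAt x hden
  exact hnum.mul hinv

lemma Dfun_apply (c d e : ℂ) (x : R2) (j : Fin 2) :
    Dfun c d e x (EuclideanSpace.single j 1) =
      (c + d * (x 0 : ℂ) + e * (x 1 : ℂ)) *
          (-(2 * (x j : ℂ)) * ((1 + (x 0 : ℂ) ^ 2 + (x 1 : ℂ) ^ 2) ^ 2)⁻¹) +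
        (if j = 0 then d else e) * (1 + (x 0 : ℂ) ^ 2 + (x 1 : ℂ) ^ 2)⁻¹ := by
  simp [Dfun, Lco, EuclideanSpace.single_apply]
  fin_cases j <;> simp <;> ring

set_option maxHeartbeats 1000000 in
/-- The zero resonance of the 2-d massless Dirac operator with potential q(x) = -2/⟨x⟩². -/
theorem stmt2 (φ₀ : C2) (hφ : ‖φ₀‖ = 1)
    (q : R2 → ℝ) (hq : ∀ x, q x = -2 / (1 + ‖x‖ ^ 2))
    (ψ : R2 → C2)
    (hψ : ∀ x, ψ x =
      ((Real.sqrt (1 + ‖x‖ ^ 2) : ℂ)) ⁻¹ ^ 2 • mulVecE (1 + I • sigmaDot x) φ₀) :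
    ∀ x, diracOp2 ψ x + (q x : ℂ) • ψ x = 0 := by
  intro x
  set a : ℂ := φ₀ 0 with ha
  set b : ℂ := φ₀ 1 with hb
  -- coefficient vectors for the two components of ψ
  set cv : Fin 2 → ℂ := ![a, b] with hcv
  set dv : Fin 2 → ℂ := ![I * b, I * a] with hdv
  set ev : Fin 2 → ℂ := ![b, -a] with hev
  have hnorm : ∀ y : R2, (‖y‖ : ℝ) ^ 2 = y 0 ^ 2 + y 1 ^ 2 := by
    intro y
    rw [EuclideanSpace.norm_eq, Real.sq_sqrt (by positivity)]
    simp [Fin.sum_univ_two]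
  have hscal : ∀ y : R2, ((Real.sqrt (1 + ‖y‖ ^ 2) : ℂ))⁻¹ ^ 2
      = (1 + (y 0 : ℂ) * (y 0 : ℂ) + (y 1 : ℂ) * (y 1 : ℂ))⁻¹ := by
    intro y
    rw [inv_pow, ← Complex.ofReal_pow, Real.sq_sqrt (by positivity), hnorm y]
    push_cast
    ring_nf
  have I2 : I ^ 2 = -1 := Complex.I_sq
  have I3 : I ^ 3 = -I := by rw [pow_succ, I2]; ring
  -- ψ in explicit coordinates
  have hψ' : ψ = fun y => (EuclideanSpace.equiv (Fin 2) ℂ).symm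
      (fun k => hfun (cv k) (dv k) (ev k) y) := by
    funext y
    rw [hψ y]
    refine PiLp.ext fun k => ?_
    fin_cases k
    · simp [hscal y, mulVecE, sigmaDot, pauli2, Matrix.mulVec, dotProduct,
        Fin.sum_univ_two, Matrix.one_apply, hfun, ← ha, ← hb, hcv, hdv, hev]
      linear_combination (-((1 + ((y 0 : ℝ) : ℂ) * ((y 0 : ℝ) : ℂ) +
        ((y 1 : ℝ) : ℂ) * ((y 1 : ℝ) : ℂ))⁻¹ * b * ((y 1 : ℝ) : ℂ))) * I2
    · simp [hscal y, mulVecE, sigmaDot, pauli2, Matrix.mulVec, dotProduct,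
        Fin.sum_univ_two, Matrix.one_apply, hfun, ← ha, ← hb, hcv, hdv, hev]
      linear_combination ((1 + ((y 0 : ℝ) : ℂ) * ((y 0 : ℝ) : ℂ) +
        ((y 1 : ℝ) : ℂ) * ((y 1 : ℝ) : ℂ))⁻¹ * a * ((y 1 : ℝ) : ℂ)) * I2
  -- the derivative of ψ
  have hg : HasFDerivAt (fun y => (fun k => hfun (cv k) (dv k) (ev k) y))
      (ContinuousLinearMap.pi fun k => Dfun (cv k) (dv k) (ev k) x) x :=
    hasFDerivAt_pi.2 fun k => hasD _ _ _ x
  set EL : (Fin 2 → ℂ) →L[ℝ] C2 :=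
    ((EuclideanSpace.equiv (Fin 2) ℂ).symm.toContinuousLinearMap).restrictScalars ℝ with hEL
  have hψd : HasFDerivAt ψ
      (EL.comp (ContinuousLinearMap.pi fun k => Dfun (cv k) (dv k) (ev k) x)) x := by
    rw [hψ']
    exact EL.hasFDerivAt.comp x hg
  have hfd : ∀ j : Fin 2, fderiv ℝ ψ x (EuclideanSpace.single j 1)
      = (WithLp.equiv 2 (Fin 2 → ℂ)).symm
          (fun k => Dfun (cv k) (dv k) (ev k) x (EuclideanSpace.single j 1)) := by
    intro j
    rw [hψd.fderiv]
    rfl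
  -- finish componentwise
  have hR : ((1 : ℂ) + (x 0 : ℂ) ^ 2 + (x 1 : ℂ) ^ 2) ≠ 0 := by
    have := hRne x; intro h; apply this; rw [← h]; ring
  have hq' : ((q x : ℝ) : ℂ) = -2 / (1 + (x 0 : ℂ) ^ 2 + (x 1 : ℂ) ^ 2) := by
    rw [hq x, hnorm x]; push_cast; ring_nf
  refine PiLp.ext fun k => ?_
  have hψx := congrFun hψ' x
  fin_cases k
  · simp only [diracOp2, PiLp.add_apply, PiLp.smul_apply, Fin.sum_univ_two, hfd,
      hψx, mulVecE, sigmaDot, pauli2, hq']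
    simp [Matrix.mulVec, dotProduct, Fin.sum_univ_two, Dfun_apply, hfun,
      WithLp.equiv_symm_apply, hcv, hdv, hev, smul_eq_mul, Matrix.cons_val_zero,
      Matrix.cons_val_one, Matrix.head_cons]
    field_simp [hR, hRne x]
    ring_nf
    simp only [I2, I3]
    ring
  · simp only [diracOp2, PiLp.add_apply, PiLp.smul_apply, Fin.sum_univ_two, hfd,
      hψx, mulVecE, sigmaDot, pauli2, hq']
    simp [Matrix.mulVec, dotProduct, Fin.sum_univ_two, Dfun_apply, hfun,
      WithLp.equiv_symm_apply, hcv, hdv, hev, smul_eq_mul, Matrix.cons_val_zero,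
      Matrix.cons_val_one, Matrix.head_cons]
    field_simp [hR, hRne x]
    ring_nf
    simp only [I2, I3]
    ring
end
end

section
/- The function ψ(x) = ⟨x⟩⁻² (I₂ + i σ·x) φ₀ on ℝ², with φ₀ a unit vector in ℂ², is not in L²(ℝ²;ℂ²), but ⟨x⟩⁻ˢ ψ ∈ L²(ℝ²;ℂ²) for every s > 0. -/
open Matrix Complex MeasureTheory Filter
open scoped RealInnerProductSpace Matrix.Norms.L2Operator
open scoped ENNReal NNReal

noncomputable section

lemma norm_x_sq (x : R2) : ‖x‖ ^ 2 = x 0 ^ 2 + x 1 ^ 2 := by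
  rw [EuclideanSpace.norm_eq, Real.sq_sqrt (by positivity)]
  simp [Fin.sum_univ_two, sq_abs]

lemma norm_mulVecE_sq (x : R2) (φ₀ : C2) :
    ‖mulVecE (1 + I • sigmaDot x) φ₀‖ ^ 2 = (1 + ‖x‖ ^ 2) * ‖φ₀‖ ^ 2 := by
  rw [norm_x_sq]
  rw [EuclideanSpace.norm_eq, Real.sq_sqrt (by positivity),
    EuclideanSpace.norm_eq, Real.sq_sqrt (by positivity)]
  simp only [mulVecE, sigmaDot, pauli2, Fin.sum_univ_two, WithLp.equiv_symm_apply,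
    PiLp.toLp_apply, WithLp.equiv_apply, Matrix.mulVec, dotProduct, Matrix.add_apply,
    Matrix.one_apply, Matrix.smul_apply, Matrix.cons_val_zero, Matrix.cons_val_one,
    Matrix.head_cons, Matrix.head_fin_const, Complex.sq_norm]
  norm_num [Matrix.of_apply, Matrix.cons_val', Matrix.cons_val_zero, Matrix.cons_val_one,
    Matrix.head_cons, Matrix.empty_val', Matrix.cons_val_fin_one, Matrix.head_fin_const]
  simp only [Complex.normSq_apply, Complex.add_re, Complex.add_im, Complex.mul_re, Complex.mul_im,
    Complex.one_re, Complex.one_im, Complex.I_re, Complex.I_im, Complex.ofReal_re,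
    Complex.ofReal_im, Complex.neg_re, Complex.neg_im, Complex.zero_re, Complex.zero_im]
  ring

lemma norm_mulVecE_eq (x : R2) (φ₀ : C2) (hφ : ‖φ₀‖ = 1) :
    ‖mulVecE (1 + I • sigmaDot x) φ₀‖ = Real.sqrt (1 + ‖x‖ ^ 2) := by
  rw [← Real.sqrt_sq (norm_nonneg _), norm_mulVecE_sq, hφ, one_pow, mul_one]

lemma norm_psi_formula (x : R2) (φ₀ : C2) (hφ : ‖φ₀‖ = 1) :
    ‖(((Real.sqrt (1 + ‖x‖ ^ 2) : ℂ))⁻¹ ^ 2 • mulVecE (1 + I • sigmaDot x) φ₀ : C2)‖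
      = (Real.sqrt (1 + ‖x‖ ^ 2))⁻¹ := by
  have ht : (0:ℝ) < Real.sqrt (1 + ‖x‖ ^ 2) := Real.sqrt_pos.2 (by positivity)
  rw [norm_smul, norm_pow, norm_inv, Complex.norm_real, Real.norm_eq_abs,
    abs_of_pos ht, norm_mulVecE_eq x φ₀ hφ]
  field_simp

@[fun_prop]
lemma cont_coord (j : Fin 2) : Continuous fun x : R2 => x j :=
  (EuclideanSpace.proj (𝕜 := ℝ) j).continuous

lemma cont_psi (φ₀ : C2) :
    Continuous fun x : R2 =>
      (((Real.sqrt (1 + ‖x‖ ^ 2) : ℂ))⁻¹ ^ 2 • mulVecE (1 + I • sigmaDot x) φ₀ : C2) := by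
  have h1 : Continuous fun x : R2 => ((Real.sqrt (1 + ‖x‖ ^ 2) : ℂ))⁻¹ ^ 2 := by
    apply Continuous.pow
    apply Continuous.inv₀
    · exact Complex.continuous_ofReal.comp (Real.continuous_sqrt.comp (by fun_prop))
    · intro x
      simp only [ne_eq, Complex.ofReal_eq_zero]
      exact ne_of_gt (Real.sqrt_pos.2 (by positivity))
  have h2 : Continuous fun x : R2 => mulVecE (1 + I • sigmaDot x) φ₀ := by
    unfold mulVecE
    refine (PiLp.continuous_toLp 2 _).comp ?_
    apply continuous_pi
    intro i
    simp only [Matrix.mulVec, dotProduct, Fin.sum_univ_two, sigmaDot,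
      Matrix.add_apply, Matrix.one_apply, Matrix.smul_apply, smul_eq_mul, pauli2]
    fun_prop
  exact h1.smul h2

lemma lint_top : ∫⁻ x : R2, ENNReal.ofReal ((1 + ‖x‖ ^ 2)⁻¹) = ⊤ := by
  set f : R2 → ℝ≥0∞ := fun x => ENNReal.ofReal ((1 + ‖x‖ ^ 2)⁻¹) with hf
  set A : ℕ → Set R2 := fun k => Metric.ball 0 (2 ^ (k + 1)) \ Metric.ball 0 (2 ^ k) with hA
  set V : ℝ≥0∞ := volume (Metric.ball (0 : R2) 1) with hV
  have hVpos : 0 < V := Metric.measure_ball_pos _ _ one_pos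
  have hVtop : V < ⊤ := measure_ball_lt_top
  set c : ℝ≥0∞ := ENNReal.ofReal (3 / 8 : ℝ) * V with hc
  have hcne : c ≠ 0 := by
    refine mul_ne_zero ?_ hVpos.ne'
    simp [ENNReal.ofReal_eq_zero]
  have hmeas : ∀ k, MeasurableSet (A k) := fun k =>
    measurableSet_ball.diff measurableSet_ball
  have hdisj : Pairwise (Function.onFun Disjoint A) := by
    have key : ∀ k l : ℕ, k < l → Disjoint (A k) (A l) := by
      intro k l hkl
      refine Set.disjoint_left.2 fun x hxk hxl => hxl.2 ?_
      have h2l : ((2:ℝ) ^ (k+1)) ≤ 2 ^ l := by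
        apply pow_le_pow_right₀ one_le_two hkl
      exact Metric.ball_subset_ball h2l hxk.1
    intro k l hkl
    rcases hkl.lt_or_gt with h | h
    exacts [key _ _ h, (key _ _ h).symm]
  have hpow : ∀ k : ℕ, ((2:ℝ) ^ k) ^ 2 = 4 ^ k := by
    intro k
    rw [← pow_mul, mul_comm, pow_mul]
    norm_num
  have hvolA : ∀ k, volume (A k) = ENNReal.ofReal (3 * 4 ^ k) * V := by
    intro k
    rw [hA]
    dsimp only
    rw [measure_diff (Metric.ball_subset_ball (pow_le_pow_right₀ one_le_two (Nat.le_succ k)))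
      measurableSet_ball.nullMeasurableSet measure_ball_lt_top.ne]
    simp only [Nat.succ_eq_add_one]
    rw [Measure.addHaar_ball volume (0 : R2) (by positivity : (0:ℝ) ≤ 2 ^ (k+1)),
      Measure.addHaar_ball volume (0 : R2) (by positivity : (0:ℝ) ≤ 2 ^ k),
      finrank_euclideanSpace_fin, hpow (k+1), hpow k, ← ENNReal.sub_mul (fun _ _ => hVtop.ne),
      ← ENNReal.ofReal_sub _ (by positivity)]
    congr 2
    rw [pow_succ]
    ring
  have hlow : ∀ k : ℕ, c ≤ ∫⁻ x in A k, f x := by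
    intro k
    have hb : ∀ x ∈ A k, ENNReal.ofReal ((8 * 4 ^ k : ℝ)⁻¹) ≤ f x := by
      intro x hx
      apply ENNReal.ofReal_le_ofReal
      apply inv_anti₀ (by positivity)
      have hxn : ‖x‖ ≤ 2 ^ (k + 1) := by
        have := hx.1
        rw [Metric.mem_ball, dist_zero_right] at this
        exact this.le
      have h2 : ‖x‖ ^ 2 ≤ ((2:ℝ) ^ (k+1)) ^ 2 := by
        apply pow_le_pow_left₀ (norm_nonneg _) hxn
      rw [hpow (k+1)] at h2
      have h4 : (1:ℝ) ≤ 4 ^ k := one_le_pow₀ (by norm_num)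
      have h5 : (4:ℝ) ^ (k+1) = 4 * 4 ^ k := by rw [pow_succ]; ring
      nlinarith
    calc c ≤ ENNReal.ofReal ((8 * 4 ^ k : ℝ)⁻¹) * volume (A k) := by
          rw [hvolA, ← mul_assoc, ← ENNReal.ofReal_mul (by positivity), hc]
          have he : ((8 * 4 ^ k : ℝ))⁻¹ * (3 * 4 ^ k) = 3 / 8 := by
            field_simp
          rw [he]
      _ = ∫⁻ _ in A k, ENNReal.ofReal ((8 * 4 ^ k : ℝ)⁻¹) := by
          rw [setLIntegral_const]
      _ ≤ ∫⁻ x in A k, f x := by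
          apply setLIntegral_mono_ae (by fun_prop)
          exact ae_of_all _ hb
  refine top_le_iff.1 ?_
  calc (⊤:ℝ≥0∞) = ∑' _ : ℕ, c := (ENNReal.tsum_const_eq_top_of_ne_zero hcne).symm
    _ ≤ ∑' k, ∫⁻ x in A k, f x := ENNReal.tsum_le_tsum hlow
    _ = ∫⁻ x in ⋃ k, A k, f x := (lintegral_iUnion hmeas hdisj f).symm
    _ ≤ ∫⁻ x, f x := setLIntegral_le_lintegral _ _


/-- ψ(x) = ⟨x⟩⁻²(I₂ + iσ·x)φ₀ is not in L²(ℝ²;ℂ²), but ⟨x⟩⁻ˢψ ∈ L² for every s > 0. -/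
theorem stmt3 (φ₀ : C2) (hφ : ‖φ₀‖ = 1)
    (ψ : R2 → C2)
    (hψ : ∀ x, ψ x =
      ((Real.sqrt (1 + ‖x‖ ^ 2) : ℂ)) ⁻¹ ^ 2 • mulVecE (1 + I • sigmaDot x) φ₀) :
    ¬ MeasureTheory.MemLp ψ 2 MeasureTheory.volume ∧
    ∀ s : ℝ, 0 < s →
      MeasureTheory.MemLp
        (fun x => ((Real.sqrt (1 + ‖x‖ ^ 2) ^ (-s) : ℝ) : ℂ) • ψ x) 2
        MeasureTheory.volume := by
  have hψc : Continuous ψ := by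
    have := cont_psi φ₀
    convert this using 1
    exact funext hψ
  have hnorm : ∀ x, ‖ψ x‖ = (Real.sqrt (1 + ‖x‖ ^ 2))⁻¹ := by
    intro x
    rw [hψ]
    exact norm_psi_formula x φ₀ hφ
  constructor
  · intro hmem
    have hint : Integrable (fun x => ‖ψ x‖ ^ 2) volume :=
      (memLp_two_iff_integrable_sq_norm hψc.aestronglyMeasurable).1 hmem
    have hint' : Integrable (fun x : R2 => (1 + ‖x‖ ^ 2)⁻¹) volume := by
      refine hint.congr (ae_of_all _ fun x => ?_)
      show ‖ψ x‖ ^ 2 = (1 + ‖x‖ ^ 2)⁻¹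
      rw [hnorm, ← Real.sqrt_inv, Real.sq_sqrt (by positivity)]
    have := hint'.2
    rw [HasFiniteIntegral] at this
    have heq : ∀ x : R2, ‖(1 + ‖x‖ ^ 2)⁻¹‖ₑ = ENNReal.ofReal ((1 + ‖x‖ ^ 2)⁻¹) :=
      fun x => Real.enorm_eq_ofReal (by positivity)
    rw [lintegral_congr heq, lint_top] at this
    exact absurd this (lt_irrefl _)
  · intro s hs
    have hw : Continuous fun x : R2 => ((Real.sqrt (1 + ‖x‖ ^ 2) ^ (-s) : ℝ) : ℂ) := by
      apply Complex.continuous_ofReal.comp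
      apply Continuous.rpow_const
      · exact Real.continuous_sqrt.comp (by fun_prop)
      · intro x
        exact Or.inl (ne_of_gt (Real.sqrt_pos.2 (by positivity)))
    have haem : AEStronglyMeasurable (fun x => ((Real.sqrt (1 + ‖x‖ ^ 2) ^ (-s) : ℝ) : ℂ) • ψ x) volume := (hw.smul hψc).aestronglyMeasurable (μ := volume)
    rw [memLp_two_iff_integrable_sq_norm haem]
    have hfin : ((Module.finrank ℝ R2 : ℝ)) < 2 + 2 * s := by
      rw [finrank_euclideanSpace_fin]
      push_cast
      linarith
    have key : ∀ x : R2, ‖((Real.sqrt (1 + ‖x‖ ^ 2) ^ (-s) : ℝ) : ℂ) • ψ x‖ ^ 2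
        = (1 + ‖x‖ ^ 2) ^ (-(2 + 2 * s) / 2) := by
      intro x
      have ht : (0:ℝ) < 1 + ‖x‖ ^ 2 := by positivity
      have hsq : Real.sqrt (1 + ‖x‖ ^ 2) = (1 + ‖x‖ ^ 2) ^ ((1:ℝ)/2) := Real.sqrt_eq_rpow _
      rw [norm_smul, hnorm, Complex.norm_real, Real.norm_eq_abs,
        abs_of_pos (Real.rpow_pos_of_pos (Real.sqrt_pos.2 ht) _), hsq,
        ← Real.rpow_neg_one ((1 + ‖x‖ ^ 2) ^ ((1:ℝ)/2)),
        ← Real.rpow_add (Real.rpow_pos_of_pos ht _),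
        ← Real.rpow_natCast (((1 + ‖x‖ ^ 2) ^ ((1:ℝ)/2)) ^ (-s + -1)) 2,
        ← Real.rpow_mul (Real.rpow_nonneg ht.le _),
        ← Real.rpow_mul ht.le]
      congr 1
      push_cast
      ring
    exact (integrable_rpow_neg_one_add_norm_sq (μ := volume) hfin).congr
      (ae_of_all _ fun x => (key x).symm)
end
end

section
/- For any vector v ∈ ℝ³ and spinor u ∈ ℂ⁴, the Dirac matrix contraction satisfies |(α·v) u| = |v| · |u|, where |·| denotes the ℂ⁴ Euclidean norm. -/
open Matrix Complex MeasureTheory Filter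
open scoped RealInnerProductSpace Matrix.Norms.L2Operator

noncomputable section

lemma e0 : (finSumFinEquiv (n := 2)).symm (0:Fin (2+2)) = Sum.inl (0 : Fin 2) := rfl
lemma e1 : (finSumFinEquiv (n := 2)).symm (1:Fin (2+2)) = Sum.inl (1 : Fin 2) := rfl
lemma e2 : (finSumFinEquiv (n := 2)).symm (2:Fin (2+2)) = Sum.inr (0 : Fin 2) := rfl
lemma e3 : (finSumFinEquiv (n := 2)).symm (3:Fin (2+2)) = Sum.inr (1 : Fin 2) := rfl

lemma alphaDot_eq (v : R3) : alphaDot v = !![0,0,(v 2:ℂ), v 0 - v 1 * I;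
    0,0, v 0 + v 1 * I, -(v 2:ℂ); (v 2:ℂ), v 0 - v 1*I, 0,0;
    v 0 + v 1*I, -(v 2:ℂ), 0,0] := by
  ext i j
  fin_cases i <;> fin_cases j <;>
    simp [alphaDot, diracAlpha, pauli, Fin.sum_univ_three, Matrix.fromBlocks,
      e0, e1, e2, e3, Matrix.vecHead, Matrix.vecTail] <;> ring

/-- |(α·v)u| = |v||u| for every v ∈ ℝ³, u ∈ ℂ⁴. -/
theorem stmt4 (v : R3) (u : C4) : ‖mulVecE (alphaDot v) u‖ = ‖v‖ * ‖u‖ := by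
  have key : ‖mulVecE (alphaDot v) u‖ ^ 2 = (‖v‖ * ‖u‖) ^ 2 := by
    rw [mul_pow]
    have h1 : ∀ (n:ℕ) (w : EuclideanSpace ℂ (Fin n)), ‖w‖^2 = ∑ i, Complex.normSq (w i) := by
      intro n w
      rw [EuclideanSpace.norm_eq, Real.sq_sqrt (by positivity)]
      congr 1; ext i; rw [← Complex.sq_norm]
    have h2 : ‖v‖^2 = ∑ j, (v j)^2 := by
      rw [EuclideanSpace.norm_eq, Real.sq_sqrt (by positivity)]
      congr 1; ext j; rw [Real.norm_eq_abs, _root_.sq_abs]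
    rw [h1, h1, h2]
    simp only [mulVecE, alphaDot_eq, WithLp.equiv_symm_apply, PiLp.toLp_apply, Matrix.mulVec,
      dotProduct, Fin.sum_univ_four, Fin.sum_univ_three, WithLp.equiv_apply]
    simp [Complex.normSq_apply, Complex.add_re, Complex.add_im, Complex.mul_re,
      Complex.mul_im, Complex.sub_re, Complex.sub_im, Matrix.cons_val_zero,
      Matrix.cons_val_one, Matrix.vecHead, Matrix.vecTail]
    ring
  have h3 := norm_nonneg (mulVecE (alphaDot v) u)
  nlinarith [mul_nonneg (norm_nonneg v) (norm_nonneg u)]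
end
end

section
/- Let M : ℕ → ℝ be monotonically increasing with M(n) > 0 for all n, and suppose M is polynomially bounded along powers of 4: there exist constants C > 0, N ∈ ℕ, and ν₀ ∈ ℕ, ν₀ ≥ 1, such that M(4^ℓ ν₀) ≤ C · 4^{(2N+3)ℓ} for all ℓ ∈ ℕ. Then liminf_{n→∞} (M(2n) − M(n)) / (n² M(n)) = 0. -/
open Filter

/-- If M : ℕ → ℝ is positive, monotone, and polynomially bounded along powers of 4, then
liminf (M(2n) - M(n))/(n² M(n)) = 0. -/
theorem stmt7 (M : ℕ → ℝ) (hmono : Monotone M) (hpos : ∀ n, 0 < M n)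
    (C : ℝ) (hC : 0 < C) (N ν₀ : ℕ) (hν : 1 ≤ ν₀)
    (hbound : ∀ ℓ : ℕ, M (4 ^ ℓ * ν₀) ≤ C * 4 ^ ((2 * N + 3) * ℓ)) :
    Filter.liminf (fun n : ℕ => (M (2 * n) - M n) / ((n : ℝ) ^ 2 * M n)) Filter.atTop = 0 := by
  set f : ℕ → ℝ := fun n => (M (2 * n) - M n) / ((n : ℝ) ^ 2 * M n) with hf
  have hfnonneg : ∀ n, 0 ≤ f n := by
    intro n
    apply div_nonneg
    · have : M n ≤ M (2 * n) := hmono (by omega)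
      linarith
    · exact mul_nonneg (sq_nonneg _) (hpos n).le
  -- Key claim: for every ε > 0, frequently f n < ε.
  have key : ∀ ε : ℝ, 0 < ε → ∀ m : ℕ, ∃ n, m ≤ n ∧ f n < ε := by
    intro ε hε m
    by_contra hcon
    push_neg at hcon
    have h : ∀ n, m ≤ n → ε ≤ f n := hcon
    -- choose L large
    set L : ℕ := max m ⌈1 / ε⌉₊ with hL
    set ν : ℕ := 4 ^ L * ν₀ with hνdef
    have hLν : L + 1 ≤ ν := by
      have h4 : L < 4 ^ L := Nat.lt_pow_self (by norm_num : 1 < 4)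
      calc L + 1 ≤ 4 ^ L := h4
        _ ≤ 4 ^ L * ν₀ := Nat.le_mul_of_pos_right _ (by omega)
    have hνm : m ≤ ν := by
      have : m ≤ L := le_max_left _ _
      omega
    have hν1 : 1 ≤ ν := by omega
    have hεν : 1 ≤ ε * (ν : ℝ) ^ 2 := by
      have hceil : ⌈1 / ε⌉₊ ≤ ν := by
        have : ⌈1 / ε⌉₊ ≤ L := le_max_right _ _
        omega
      have h1 : (1 : ℝ) / ε ≤ (ν : ℝ) := by
        calc (1 : ℝ) / ε ≤ ⌈1 / ε⌉₊ := Nat.le_ceil _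
          _ ≤ (ν : ℝ) := by exact_mod_cast hceil
      have hν1' : (1 : ℝ) ≤ (ν : ℝ) := by exact_mod_cast hν1
      have h2 : 1 ≤ ε * (ν : ℝ) := by
        rw [div_le_iff₀ hε] at h1
        linarith [h1]
      calc (1 : ℝ) ≤ ε * ν := h2
        _ ≤ ε * (ν : ℝ) ^ 2 := by nlinarith [hν1', hε.le]
    -- step inequality
    have hstep : ∀ n : ℕ, ν ≤ n → ε * (n : ℝ) ^ 2 * M n ≤ M (2 * n) := by
      intro n hn
      have hn1 : 1 ≤ n := le_trans hν1 hn
      have hden : (0 : ℝ) < (n : ℝ) ^ 2 * M n := by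
        apply mul_pos _ (hpos n)
        have : (1 : ℝ) ≤ (n : ℝ) := by exact_mod_cast hn1
        nlinarith
      have := h n (le_trans hνm hn)
      rw [hf] at this
      simp only [le_div_iff₀ hden] at this
      have hMn := hpos n
      nlinarith [this]
    -- growth along powers of 4
    have hgrow : ∀ ℓ : ℕ, (4 : ℝ) ^ (ℓ ^ 2) * M ν ≤ M (4 ^ ℓ * ν) := by
      intro ℓ
      induction ℓ with
      | zero => simp
      | succ ℓ ih =>
        set n : ℕ := 4 ^ ℓ * ν with hn
        have hνn : ν ≤ n := Nat.le_mul_of_pos_left ν (Nat.pow_pos (by norm_num : 0 < 4))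
        have hν2n : ν ≤ 2 * n := by omega
        have e2 := hstep (2 * n) hν2n
        -- ε * (2n)^2 ≥ 4^(2ℓ+1)
        have hcast : ((2 * n : ℕ) : ℝ) = 2 * ((4 : ℝ) ^ ℓ * (ν : ℝ)) := by
          push_cast [hn]; ring
        have hc2 : (4 : ℝ) ^ (2 * ℓ + 1) ≤ ε * ((2 * n : ℕ) : ℝ) ^ 2 := by
          rw [hcast]
          have : ε * (2 * ((4 : ℝ) ^ ℓ * ν)) ^ 2
              = (4 : ℝ) ^ (2 * ℓ + 1) * (ε * (ν : ℝ) ^ 2) := by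
            have h4 : (4 : ℝ) ^ (2 * ℓ + 1) = 4 * ((4 : ℝ) ^ ℓ) ^ 2 := by
              rw [← pow_mul, mul_comm ℓ 2, pow_succ]; ring
            rw [h4]; ring
          rw [this]
          nlinarith [pow_pos (by norm_num : (0:ℝ) < 4) (2 * ℓ + 1), hεν]
        have g2 : (4 : ℝ) ^ (2 * ℓ + 1) * M (2 * n) ≤ M (2 * (2 * n)) :=
          le_trans (mul_le_mul_of_nonneg_right hc2 (hpos (2 * n)).le) e2
        have hmono2 : M n ≤ M (2 * n) := hmono (by omega)
        have hidx : 4 ^ (ℓ + 1) * ν = 2 * (2 * n) := by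
          rw [hn, pow_succ]; ring
        rw [hidx]
        have hpow : (4 : ℝ) ^ ((ℓ + 1) ^ 2) = (4 : ℝ) ^ (2 * ℓ + 1) * 4 ^ (ℓ ^ 2) := by
          rw [← pow_add]
          congr 1
          ring
        rw [hpow]
        calc (4 : ℝ) ^ (2 * ℓ + 1) * 4 ^ (ℓ ^ 2) * M ν
            = (4 : ℝ) ^ (2 * ℓ + 1) * ((4 : ℝ) ^ (ℓ ^ 2) * M ν) := by ring
          _ ≤ (4 : ℝ) ^ (2 * ℓ + 1) * M n := by
              apply mul_le_mul_of_nonneg_left ih (by positivity)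
          _ ≤ (4 : ℝ) ^ (2 * ℓ + 1) * M (2 * n) := by
              apply mul_le_mul_of_nonneg_left hmono2 (by positivity)
          _ ≤ M (2 * (2 * n)) := g2
    -- contradiction
    obtain ⟨K, hK⟩ := pow_unbounded_of_one_lt (C / M ν) (by norm_num : (1:ℝ) < 4)
    set ℓ : ℕ := 2 * N + 3 + L + K + 1 with hℓ
    have h1 : (2 * N + 3) * (ℓ + L) + K ≤ ℓ ^ 2 := by
      rw [hℓ]; nlinarith [Nat.zero_le N, Nat.zero_le L, Nat.zero_le K]
    have hidx2 : 4 ^ ℓ * ν = 4 ^ (ℓ + L) * ν₀ := by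
      rw [hνdef, pow_add]; ring
    have hb := hbound (ℓ + L)
    rw [← hidx2] at hb
    have hg := hgrow ℓ
    have hpowle : (4 : ℝ) ^ ((2 * N + 3) * (ℓ + L) + K) ≤ (4 : ℝ) ^ (ℓ ^ 2) :=
      pow_le_pow_right₀ (by norm_num) h1
    have hchain : (4 : ℝ) ^ ((2 * N + 3) * (ℓ + L) + K) * M ν ≤ C * 4 ^ ((2 * N + 3) * (ℓ + L)) := by
      calc (4 : ℝ) ^ ((2 * N + 3) * (ℓ + L) + K) * M ν
          ≤ (4 : ℝ) ^ (ℓ ^ 2) * M ν := mul_le_mul_of_nonneg_right hpowle (hpos ν).le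
        _ ≤ M (4 ^ ℓ * ν) := hg
        _ ≤ C * 4 ^ ((2 * N + 3) * (ℓ + L)) := hb
    rw [pow_add] at hchain
    have hpa : (0 : ℝ) < (4 : ℝ) ^ ((2 * N + 3) * (ℓ + L)) := by positivity
    have hKM : (4 : ℝ) ^ K * M ν ≤ C := by
      have := hchain
      nlinarith [this, hpa]
    rw [div_lt_iff₀ (hpos ν)] at hK
    linarith
  -- Now compute the liminf.
  rw [Filter.liminf_eq]
  have hS0 : (0 : ℝ) ∈ {a | ∀ᶠ n in atTop, a ≤ f n} := by
    exact Filter.Eventually.of_forall hfnonneg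
  have hSle : ∀ a ∈ {a | ∀ᶠ n in atTop, a ≤ f n}, a ≤ 0 := by
    intro a ha
    by_contra hapos
    push_neg at hapos
    rw [Set.mem_setOf_eq, Filter.eventually_atTop] at ha
    obtain ⟨m, hm⟩ := ha
    obtain ⟨n, hnm, hfn⟩ := key a hapos m
    exact absurd (hm n hnm) (not_le.mpr hfn)
  apply le_antisymm
  · exact csSup_le ⟨0, hS0⟩ hSle
  · exact le_csSup ⟨0, hSle⟩ hS0
end

section
/- Let U(a), a > 0, be a one-parameter family of unitary operators on a Hilbert space ℋ converging strongly to the identity as a → 1, let T be self-adjoint in ℋ, and set T_a := a U(a) T U(a)⁻¹. If f ∈ Dom(T) ∩ Dom(T_a) is an eigenvector of T with eigenvalue λ, then lim_{a→1} ⟨U(a)f, (T_a − T)/(a−1) · f⟩ = λ ‖f‖². -/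
open scoped InnerProductSpace

/-- The abstract virial theorem of Balinsky and Evans: for a family of unitaries U(a) converging
strongly to the identity as a → 1, a self-adjoint operator T, and an eigenvector f of T with
eigenvalue λ such that f ∈ Dom(T) ∩ Dom(T_a) where T_a = aU(a)TU(a)⁻¹, one has
lim_{a→1} ⟨U(a)f, (T_a - T)/(a-1) f⟩ = λ‖f‖². -/
theorem stmt11 {ℋ : Type*} [NormedAddCommGroup ℋ] [InnerProductSpace ℂ ℋ] [CompleteSpace ℋ]
    (U : ℝ → (ℋ ≃ₗᵢ[ℂ] ℋ))
    (hU : ∀ x : ℋ, Filter.Tendsto (fun a : ℝ => U a x) (nhds 1) (nhds x))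
    (T : ℋ →ₗ.[ℂ] ℋ) (hsa : IsSelfAdjoint T)
    (f : ℋ) (hf : f ∈ T.domain) (hfa : ∀ a : ℝ, ((U a).symm f) ∈ T.domain)
    (lam : ℂ) (heig : T ⟨f, hf⟩ = lam • f) :
    Filter.Tendsto
      (fun a : ℝ =>
        ⟪U a f, (((a : ℂ) - 1))⁻¹ •
          ((a : ℂ) • (U a (T ⟨(U a).symm f, hfa a⟩)) - T ⟨f, hf⟩)⟫_ℂ)
      (nhdsWithin 1 {(1 : ℝ)}ᶜ) (nhds (lam * ((‖f‖ : ℝ) ^ 2 : ℝ))) := by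
  classical
  have hd := hsa.dense_domain
  have hform := LinearPMap.adjoint_isFormalAdjoint (T := T) hd
  rw [LinearPMap.isSelfAdjoint_def] at hsa
  rw [hsa] at hform
  have hsym : ∀ x y : T.domain, ⟪(T x : ℋ), (y : ℋ)⟫_ℂ = ⟪(x : ℋ), (T y : ℋ)⟫_ℂ := hform
  -- conjugate of lam acts like lam against inner products with f
  have key : ∀ x : ℋ, (starRingEnd ℂ) lam * ⟪x, f⟫_ℂ = lam * ⟪x, f⟫_ℂ := by
    intro x
    by_cases hf0 : f = 0
    · simp [hf0]
    · have h1 := hsym ⟨f, hf⟩ ⟨f, hf⟩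
      rw [heig, inner_smul_left, inner_smul_right] at h1
      have hff : ⟪f, f⟫_ℂ ≠ 0 := by
        simpa [inner_self_eq_zero] using hf0
      have hcl : (starRingEnd ℂ) lam = lam := mul_right_cancel₀ hff h1
      rw [hcl]
  have heq : ∀ a : ℝ, a ≠ 1 →
      ⟪U a f, (((a : ℂ) - 1))⁻¹ •
          ((a : ℂ) • (U a (T ⟨(U a).symm f, hfa a⟩)) - T ⟨f, hf⟩)⟫_ℂ
        = lam * ⟪(U a) f, f⟫_ℂ := by
    intro a ha
    have ha' : (a : ℂ) - 1 ≠ 0 := by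
      simpa [sub_eq_zero] using (by exact_mod_cast ha : (a : ℂ) ≠ 1)
    have h2 : ⟪(U a) f, (U a) (T ⟨(U a).symm f, hfa a⟩ : ℋ)⟫_ℂ
        = ⟪f, (T ⟨(U a).symm f, hfa a⟩ : ℋ)⟫_ℂ := (U a).inner_map_map _ _
    have h3 : ⟪(f : ℋ), (T ⟨(U a).symm f, hfa a⟩ : ℋ)⟫_ℂ
        = (starRingEnd ℂ) lam * ⟪f, ((U a).symm f : ℋ)⟫_ℂ := by
      rw [← hsym ⟨f, hf⟩ ⟨(U a).symm f, hfa a⟩, heig, inner_smul_left]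
    have h4 : ⟪(U a) f, f⟫_ℂ = ⟪f, ((U a).symm f : ℋ)⟫_ℂ := by
      rw [← (U a).inner_map_map f ((U a).symm f), (U a).apply_symm_apply]
    have h5 : (starRingEnd ℂ) lam * ⟪f, ((U a).symm f : ℋ)⟫_ℂ
        = lam * ⟪(U a) f, f⟫_ℂ := by
      rw [← h4]
      exact key _
    rw [inner_smul_right, inner_sub_right, inner_smul_right, h2, h3, h5, heig,
      inner_smul_right]
    field_simp
  have hcont : Filter.Tendsto (fun a : ℝ => lam * ⟪(U a) f, f⟫_ℂ) (nhds 1)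
      (nhds (lam * ⟪f, f⟫_ℂ)) :=
    ((hU f).inner tendsto_const_nhds).const_mul lam
  have hval : lam * ⟪f, f⟫_ℂ = lam * ((‖f‖ : ℝ) ^ 2 : ℝ) := by
    rw [inner_self_eq_norm_sq_to_K]
    norm_num
  refine Filter.Tendsto.congr' ?_ ((hval ▸ hcont).mono_left nhdsWithin_le_nhds)
  filter_upwards [self_mem_nhdsWithin] with a ha using (heq a ha).symm
end

section
/- Let (Eⱼ) be a sequence of invertible 2×2 complex matrices with uniform bounds |Eⱼ| ≤ C, |Eⱼ⁻¹| ≤ C, and suppose Σⱼ |Eⱼ − Eⱼ₋₁| < ∞. Then the products Pₙ := Eₙ Dₙ Eₙ⁻¹ Eₙ₋₁ Dₙ₋₁ Eₙ₋₁⁻¹ ⋯ E_J D_J E_J⁻¹, where each Dⱼ is a diagonal unitary matrix, are uniformly bounded in operator norm: |Pₙ| ≤ C² exp(C Σⱼ |Eⱼ − Eⱼ₋₁|) for all n ≥ J. -/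
open Matrix Complex
open scoped Matrix.Norms.L2Operator

noncomputable section

/-- Stability estimate: products Pₙ = EₙDₙEₙ⁻¹ ⋯ E_J D_J E_J⁻¹ of conjugated diagonal
unitaries, with |Eⱼ|, |Eⱼ⁻¹| ≤ C and Σ|Eⱼ₊₁ - Eⱼ| < ∞, are uniformly bounded:
|Pₙ| ≤ C² exp(C Σⱼ |Eⱼ₊₁ - Eⱼ|). -/
theorem stmt16 (E : ℕ → Matrix (Fin 2) (Fin 2) ℂ) (D : ℕ → Matrix (Fin 2) (Fin 2) ℂ)
    (hE : ∀ j, IsUnit (E j)) (C : ℝ) (hC : 0 < C)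
    (hEb : ∀ j, ‖E j‖ ≤ C) (hEib : ∀ j, ‖(E j)⁻¹‖ ≤ C)
    (hD : ∀ j, D j ∈ Matrix.unitaryGroup (Fin 2) ℂ ∧ (D j).IsDiag)
    (hsum : Summable fun j => ‖E (j + 1) - E j‖) (J : ℕ)
    (P : ℕ → Matrix (Fin 2) (Fin 2) ℂ)
    (hP : ∀ n, P n =
      ((List.range (n - J + 1)).map fun i => E (n - i) * D (n - i) * (E (n - i))⁻¹).prod) :
    ∀ n, J ≤ n → ‖P n‖ ≤ C ^ 2 * Real.exp (C * ∑' j, ‖E (j + 1) - E j‖) := by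
  have hdet : ∀ j, IsUnit (E j).det := fun j => (Matrix.isUnit_iff_isUnit_det _).mp (hE j)
  have hDnorm : ∀ j, ‖D j‖ = 1 := fun j =>
    CStarRing.norm_coe_unitary (⟨D j, (hD j).1⟩ : Matrix.unitaryGroup (Fin 2) ℂ)
  -- norm bound on (E (n+1))⁻¹ * E n
  have hstep : ∀ n, ‖(E (n + 1))⁻¹ * E n‖ ≤ Real.exp (C * ‖E (n + 1) - E n‖) := by
    intro n
    have h1 : (E (n + 1))⁻¹ * E n = 1 - (E (n + 1))⁻¹ * (E (n + 1) - E n) := by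
      rw [mul_sub, Matrix.nonsing_inv_mul _ (hdet (n + 1))]
      exact (sub_sub_cancel 1 _).symm
    calc ‖(E (n + 1))⁻¹ * E n‖ ≤ ‖(1 : Matrix (Fin 2) (Fin 2) ℂ)‖
          + ‖(E (n + 1))⁻¹ * (E (n + 1) - E n)‖ := by
          rw [h1]; exact norm_sub_le _ _
      _ ≤ 1 + C * ‖E (n + 1) - E n‖ := by
          rw [CStarRing.norm_one]
          gcongr
          calc ‖(E (n + 1))⁻¹ * (E (n + 1) - E n)‖
              ≤ ‖(E (n + 1))⁻¹‖ * ‖E (n + 1) - E n‖ := norm_mul_le _ _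
            _ ≤ C * ‖E (n + 1) - E n‖ := by
                gcongr; exact hEib (n + 1)
      _ ≤ Real.exp (C * ‖E (n + 1) - E n‖) := by
          rw [add_comm]; exact Real.add_one_le_exp _
  -- key induction on the "renormalized" product
  have key : ∀ n, J ≤ n → ‖(E n)⁻¹ * P n‖ ≤
      C * Real.exp (C * ∑ j ∈ Finset.Ico J n, ‖E (j + 1) - E j‖) := by
    intro n hn
    induction n, hn using Nat.le_induction with
    | base =>
      have hPJ : P J = E J * D J * (E J)⁻¹ := by
        rw [hP J]; simp [Nat.sub_self, List.range_succ]
      have : (E J)⁻¹ * P J = D J * (E J)⁻¹ := by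
        rw [hPJ, ← mul_assoc, ← mul_assoc, Matrix.nonsing_inv_mul _ (hdet J), one_mul]
      rw [this]
      calc ‖D J * (E J)⁻¹‖ ≤ ‖D J‖ * ‖(E J)⁻¹‖ := norm_mul_le _ _
        _ ≤ 1 * C := by rw [hDnorm]; simpa using hEib J
        _ = C * Real.exp (C * ∑ j ∈ Finset.Ico J J, ‖E (j + 1) - E j‖) := by
            simp
    | succ n hn ih =>
      have hrec : P (n + 1) = E (n + 1) * D (n + 1) * (E (n + 1))⁻¹ * P n := by
        rw [hP (n + 1), hP n]
        have h1 : n + 1 - J + 1 = (n - J + 1) + 1 := by omega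
        rw [h1, List.range_succ_eq_map]
        simp only [List.map_cons, List.map_map, List.prod_cons, Nat.sub_zero]
        congr 2
        apply List.map_congr_left
        intro i _
        have h3 : n + 1 - (i + 1) = n - i := by omega
        simp [Function.comp, h3]
      have hsplit : (E (n + 1))⁻¹ * P (n + 1) =
          D (n + 1) * (((E (n + 1))⁻¹ * E n) * ((E n)⁻¹ * P n)) := by
        have h2 : ((E (n + 1))⁻¹ * E n) * ((E n)⁻¹ * P n) = (E (n + 1))⁻¹ * P n := by
          rw [mul_assoc, ← mul_assoc (E n), Matrix.mul_nonsing_inv _ (hdet n), one_mul]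
        rw [hrec, h2]
        simp only [mul_assoc]
        rw [← mul_assoc, Matrix.nonsing_inv_mul _ (hdet (n + 1)), one_mul]
      rw [hsplit]
      have hsumIco : ∑ j ∈ Finset.Ico J (n + 1), ‖E (j + 1) - E j‖ =
          (∑ j ∈ Finset.Ico J n, ‖E (j + 1) - E j‖) + ‖E (n + 1) - E n‖ :=
        Finset.sum_Ico_succ_top hn _
      calc ‖D (n + 1) * (((E (n + 1))⁻¹ * E n) * ((E n)⁻¹ * P n))‖
          ≤ ‖D (n + 1)‖ * (‖(E (n + 1))⁻¹ * E n‖ * ‖(E n)⁻¹ * P n‖) :=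
            le_trans (norm_mul_le _ _) (by gcongr; exact norm_mul_le _ _)
        _ ≤ 1 * (Real.exp (C * ‖E (n + 1) - E n‖) *
              (C * Real.exp (C * ∑ j ∈ Finset.Ico J n, ‖E (j + 1) - E j‖))) := by
            rw [hDnorm]
            exact mul_le_mul_of_nonneg_left
              (mul_le_mul (hstep n) ih (norm_nonneg _) (Real.exp_nonneg _)) zero_le_one
        _ = C * Real.exp (C * ∑ j ∈ Finset.Ico J (n + 1), ‖E (j + 1) - E j‖) := by
            rw [hsumIco, one_mul, mul_add, Real.exp_add]
            ring
  intro n hn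
  have hEPn : P n = E n * ((E n)⁻¹ * P n) := by
    rw [← mul_assoc, Matrix.mul_nonsing_inv _ (hdet n), one_mul]
  have hsum_le : ∑ j ∈ Finset.Ico J n, ‖E (j + 1) - E j‖ ≤ ∑' j, ‖E (j + 1) - E j‖ :=
    Summable.sum_le_tsum _ (fun i _ => norm_nonneg _) hsum
  calc ‖P n‖ = ‖E n * ((E n)⁻¹ * P n)‖ := by rw [← hEPn]
    _ ≤ ‖E n‖ * ‖(E n)⁻¹ * P n‖ := norm_mul_le _ _
    _ ≤ C * (C * Real.exp (C * ∑ j ∈ Finset.Ico J n, ‖E (j + 1) - E j‖)) :=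
        mul_le_mul (hEb n) (key n hn) (norm_nonneg _) hC.le
    _ ≤ C ^ 2 * Real.exp (C * ∑' j, ‖E (j + 1) - E j‖) := by
        rw [pow_two, mul_assoc]
        gcongr
end
end
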